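/- Let p be a prime, n a positive integer, and k a positive integer. Let W be a module over R = 𝔽_p[G] (written additively), let v_1, ..., v_k ∈ W form a basis of a free R-submodule V of rank k, and let δ ∈ W satisfy (σ-1)^{p^n-1}·δ = 0 and δ ∉ V. For each c = (c_1,...,c_k) ∈ 𝔽_p^k, let V_c denote the R-submodule of W generated by v_1 + c_1·δ, ..., v_k + c_k·δ. Then the map c ↦ V_c is injective: if b ≠ c in 𝔽_p^k then V_b ≠ V_c. (Distinctness claim in the proof of Proposition 4.2.) -/

import Mathlib

/-- The cyclic group `ℤ/pⁿℤ`, written multiplicatively. -/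
abbrev Gpn (p n : ℕ) : Type := Multiplicative (ZMod (p ^ n))

/-- The group algebra `𝔽_p[ℤ/pⁿℤ]`. -/
abbrev Rpn (p n : ℕ) : Type := MonoidAlgebra (ZMod p) (Gpn p n)

/-- The fixed generator `σ` of `ℤ/pⁿℤ`, viewed inside the group algebra. -/
noncomputable def sigmaPn (p n : ℕ) : Rpn p n :=
  MonoidAlgebra.of (ZMod p) (Gpn p n) (Multiplicative.ofAdd (1 : ZMod (p ^ n)))

section Aux
variable (p n : ℕ)

noncomputable def epsPn : Rpn p n →ₐ[ZMod p] ZMod p :=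
  MonoidAlgebra.lift (ZMod p) (ZMod p) (Gpn p n) 1

lemma sigma_pow (j : ℕ) : sigmaPn p n ^ j
    = MonoidAlgebra.of (ZMod p) (Gpn p n) (Multiplicative.ofAdd ((j : ZMod (p ^ n)))) := by
  rw [sigmaPn, ← map_pow]
  congr 1
  rw [← ofAdd_nsmul]
  simp

lemma charP_R : CharP (Rpn p n) p := by
  have : Function.Injective (algebraMap (ZMod p) (Rpn p n)) := by
    intro a b h
    have := congrArg (fun f : Rpn p n => f.coeff (1 : Gpn p n)) h
    simpa [MonoidAlgebra.coe_algebraMap, MonoidAlgebra.single_apply] using this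
  exact charP_of_injective_algebraMap this p

end Aux

section Aux2
variable (p n : ℕ)

lemma sigma_pow_q : sigmaPn p n ^ (p ^ n) = 1 := by
  rw [sigma_pow, show ((p ^ n : ℕ) : ZMod (p ^ n)) = 0 by simp, ofAdd_zero]
  exact map_one _

lemma x_nilpotent (hp : p.Prime) : (sigmaPn p n - 1) ^ (p ^ n) = 0 := by
  haveI : Fact p.Prime := ⟨hp⟩
  haveI := charP_R p n
  rw [sub_pow_char_pow, sigma_pow_q, one_pow, sub_self]

lemma eps_single (g : Gpn p n) (c : ZMod p) :
    epsPn p n (MonoidAlgebra.single g c) = c := by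
  simp [epsPn, MonoidAlgebra.lift_single]

lemma x_dvd (hp : p.Prime) (s : Rpn p n) :
    (sigmaPn p n - 1) ∣ (s - algebraMap (ZMod p) (Rpn p n) (epsPn p n s)) := by
  haveI : NeZero (p ^ n) := NeZero.of_pos (pow_pos hp.pos n)
  induction s using MonoidAlgebra.induction_on with
  | of g =>
      have hg : MonoidAlgebra.of (ZMod p) (Gpn p n) g
          = sigmaPn p n ^ ((Multiplicative.toAdd g).val) := by
        rw [sigma_pow]
        congr 1
        simp [ZMod.natCast_val, ZMod.cast_id]
      have he : epsPn p n (MonoidAlgebra.of (ZMod p) (Gpn p n) g) = 1 := by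
        rw [epsPn, MonoidAlgebra.lift_of]; rfl
      rw [he, map_one, hg]
      simpa using sub_dvd_pow_sub_pow (sigmaPn p n) 1 ((Multiplicative.toAdd g).val)
  | add f g hf hg =>
      have : f + g - algebraMap (ZMod p) (Rpn p n) (epsPn p n (f + g))
          = (f - algebraMap (ZMod p) (Rpn p n) (epsPn p n f))
            + (g - algebraMap (ZMod p) (Rpn p n) (epsPn p n g)) := by
        rw [map_add, map_add]; abel
      rw [this]
      exact dvd_add hf hg
  | smul r f hf =>
      have : r • f - algebraMap (ZMod p) (Rpn p n) (epsPn p n (r • f))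
          = algebraMap (ZMod p) (Rpn p n) r * (f - algebraMap (ZMod p) (Rpn p n) (epsPn p n f)) := by
        simp [Algebra.smul_def, mul_sub, eps_single]
      rw [this]
      exact Dvd.dvd.mul_left hf _
end Aux2

section Aux3
variable (p n : ℕ)

lemma x_pow_ne (hp : p.Prime) (hn : 0 < n) : (sigmaPn p n - 1) ^ (p ^ n - 1) ≠ 0 := by
  haveI : Fact p.Prime := ⟨hp⟩
  haveI : NeZero (p ^ n) := NeZero.of_pos (pow_pos hp.pos n)
  have hq : 1 < p ^ n := Nat.one_lt_pow hn.ne' hp.one_lt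
  set N := p ^ n - 1 with hN
  have hNq : N < p ^ n := by omega
  have hterm : ∀ j : ℕ, (-1 : Rpn p n) ^ (j + N) * sigmaPn p n ^ j * (1:Rpn p n) ^ (N - j)
      * ((N.choose j : ℕ) : Rpn p n)
      = MonoidAlgebra.single (Multiplicative.ofAdd ((j : ZMod (p ^ n))))
          ((-1) ^ (j + N) * ((N.choose j : ℕ) : ZMod p)) := by
    intro j
    rw [one_pow, mul_one, sigma_pow]
    rw [show ((-1 : Rpn p n) ^ (j + N)) = algebraMap (ZMod p) (Rpn p n) ((-1) ^ (j + N)) by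
      rw [map_pow, map_neg, map_one]]
    rw [show (((N.choose j : ℕ) : Rpn p n)) = algebraMap (ZMod p) (Rpn p n) ((N.choose j : ℕ) : ZMod p) by
      rw [map_natCast]]
    rw [show (algebraMap (ZMod p) (Rpn p n) ((-1) ^ (j + N))) = MonoidAlgebra.single 1 ((-1) ^ (j + N)) from rfl]
    rw [show (algebraMap (ZMod p) (Rpn p n) ((N.choose j : ℕ) : ZMod p)) = MonoidAlgebra.single 1 ((N.choose j : ℕ) : ZMod p) from rfl]
    rw [MonoidAlgebra.of_apply, MonoidAlgebra.single_mul_single, MonoidAlgebra.single_mul_single]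
    simp
  intro h0
  have hval := congrArg (fun f : Rpn p n => f.coeff (Multiplicative.ofAdd ((N : ZMod (p ^ n))))) h0
  rw [sub_pow] at hval
  simp only [MonoidAlgebra.coeff_zero, Finsupp.coe_zero, Pi.zero_apply] at hval
  rw [MonoidAlgebra.coeff_sum, Finsupp.finset_sum_apply] at hval
  have hsum : ∑ j ∈ Finset.range (N + 1),
      ((-1 : Rpn p n) ^ (j + N) * sigmaPn p n ^ j * (1:Rpn p n) ^ (N - j)
        * ((N.choose j : ℕ) : Rpn p n)).coeff (Multiplicative.ofAdd ((N : ZMod (p ^ n)))) = 1 := by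
    rw [Finset.sum_eq_single N]
    · rw [hterm, MonoidAlgebra.coeff_single, Finsupp.single_apply, if_pos rfl]
      simp [← two_mul, pow_mul, Nat.choose_self]
    · intro j hj hjN
      rw [hterm, MonoidAlgebra.coeff_single, Finsupp.single_apply, if_neg, ]
      intro hEq
      apply hjN
      have := Multiplicative.ofAdd.injective hEq
      have hj' : j < p ^ n := by
        rw [Finset.mem_range] at hj; omega
      have := congrArg ZMod.val this
      rwa [ZMod.val_cast_of_lt hj', ZMod.val_cast_of_lt hNq] at this
    · intro h; exact absurd (Finset.self_mem_range_succ N) h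
  rw [hsum] at hval
  exact (one_ne_zero : (1 : ZMod p) ≠ 0) hval

lemma isUnit_of_eps_ne (hp : p.Prime) (r : Rpn p n) (hr : epsPn p n r ≠ 0) : IsUnit r := by
  haveI : Fact p.Prime := ⟨hp⟩
  obtain ⟨t, ht⟩ := x_dvd p n hp r
  have hnil : IsNilpotent ((sigmaPn p n - 1) * t) :=
    ⟨p ^ n, by rw [mul_pow, x_nilpotent p n hp, zero_mul]⟩
  have hu : IsUnit (algebraMap (ZMod p) (Rpn p n) (epsPn p n r)) :=
    (hr.isUnit).map (algebraMap (ZMod p) (Rpn p n))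
  have hrw : r = algebraMap (ZMod p) (Rpn p n) (epsPn p n r) + (sigmaPn p n - 1) * t := by
    rw [← ht]; ring
  rw [hrw]
  exact hnil.isUnit_add_left_of_commute hu (Commute.all _ _)

lemma eps_kill (hp : p.Prime) (hn : 0 < n) (h : Rpn p n)
    (hh : (sigmaPn p n - 1) ^ (p ^ n - 1) * h = 0) : epsPn p n h = 0 := by
  by_contra hne
  obtain ⟨u, hu⟩ := isUnit_of_eps_ne p n hp h hne
  apply x_pow_ne p n hp hn
  have := congrArg (fun z => z * (↑u⁻¹ : Rpn p n)) hh
  simp only [zero_mul] at this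
  rw [mul_assoc, ← hu] at this
  rw [show (↑u * ↑u⁻¹ : Rpn p n) = 1 by exact_mod_cast u.mul_inv, mul_one] at this
  exact this
end Aux3

/-- Distinctness claim in the proof of Proposition 4.2: with `v₁, …, v_k` a basis of
a free rank-`k` submodule `V`, `(σ-1)^{pⁿ-1}·δ = 0` and `δ ∉ V`, the assignment
`c ↦ V_c = span(v₁ + c₁δ, …, v_k + c_kδ)` is injective on `𝔽_p^k`. -/
theorem perturbed_submodules_distinct (p n k : ℕ) (hp : p.Prime) (hn : 0 < n) (hk : 0 < k)
    (W : Type*) [AddCommGroup W] [Module (Rpn p n) W]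
    (v : Fin k → W)
    (hv : ∀ g : Fin k → Rpn p n, ∑ i, g i • v i = 0 → ∀ i, g i = 0)
    (δ : W) (hδ₁ : ((sigmaPn p n - 1) ^ (p ^ n - 1)) • δ = 0)
    (hδ₂ : δ ∉ Submodule.span (Rpn p n) (Set.range v)) :
    Function.Injective (fun c : Fin k → ZMod p =>
      Submodule.span (Rpn p n)
        (Set.range fun i => v i + algebraMap (ZMod p) (Rpn p n) (c i) • δ)) := by
  intro b c hbc
  dsimp only at hbc
  funext i
  have hmem : v i + algebraMap (ZMod p) (Rpn p n) (b i) • δ ∈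
      Submodule.span (Rpn p n)
        (Set.range fun j => v j + algebraMap (ZMod p) (Rpn p n) (c j) • δ) := by
    rw [← hbc]
    exact Submodule.subset_span ⟨i, rfl⟩
  rw [Submodule.mem_span_range_iff_exists_fun] at hmem
  obtain ⟨g, hg⟩ := hmem
  set N := p ^ n - 1 with hNdef
  set x := sigmaPn p n - 1 with hxdef
  set h : Fin k → Rpn p n := fun j => g j - if j = i then 1 else 0 with hdef
  set r : Rpn p n := (∑ j, g j * algebraMap (ZMod p) (Rpn p n) (c j))
      - algebraMap (ZMod p) (Rpn p n) (b i) with hrdef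
  have hg' : (∑ j, g j • v j) + (∑ j, g j * algebraMap (ZMod p) (Rpn p n) (c j)) • δ
      = v i + algebraMap (ZMod p) (Rpn p n) (b i) • δ := by
    rw [← hg, Finset.sum_smul]
    rw [← Finset.sum_add_distrib]
    apply Finset.sum_congr rfl
    intro j _
    rw [smul_add, smul_smul]
  have h1 : ∑ j, h j • v j = (∑ j, g j • v j) - v i := by
    simp only [hdef, sub_smul, ite_smul, one_smul, zero_smul]
    rw [Finset.sum_sub_distrib]
    congr 1
    simp
  have key : (∑ j, h j • v j) + r • δ = 0 := by
    rw [h1, hrdef, sub_smul, sub_add_sub_comm, hg', sub_self]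
  -- Step 1: ε r = 0
  have hre : epsPn p n r = 0 := by
    by_contra hne
    obtain ⟨u, hu⟩ := isUnit_of_eps_ne p n hp r hne
    apply hδ₂
    have hδspan : r • δ ∈ Submodule.span (Rpn p n) (Set.range v) := by
      have hneg : r • δ = -∑ j, h j • v j := by
        rw [eq_neg_iff_add_eq_zero, add_comm]
        exact key
      rw [hneg]
      exact neg_mem (Submodule.sum_mem _ fun j _ =>
        Submodule.smul_mem _ _ (Submodule.subset_span ⟨j, rfl⟩))
    have hδeq : δ = (↑u⁻¹ : Rpn p n) • (r • δ) := by
      rw [smul_smul, ← hu, show ((↑u⁻¹ : Rpn p n) * ↑u) = 1 by exact_mod_cast u.inv_mul,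
        one_smul]
    rw [hδeq]
    exact Submodule.smul_mem _ _ hδspan
  -- Step 2: kill with x^N
  have hxh : ∀ j, x ^ N * h j = 0 := by
    apply hv
    have hkey2 := congrArg (fun w => (x ^ N) • w) key
    simp only [smul_zero, smul_add, Finset.smul_sum, smul_smul] at hkey2
    have hxr : (x ^ N * r) • δ = 0 := by
      rw [mul_comm, mul_smul, hδ₁, smul_zero]
    rwa [hxr, add_zero] at hkey2
  have hgj : ∀ j, epsPn p n (g j) = if j = i then 1 else 0 := by
    intro j
    have h0 := eps_kill p n hp hn (h j) (hxh j)
    rw [hdef] at h0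
    simp only [map_sub] at h0
    have : epsPn p n (if j = i then (1 : Rpn p n) else 0) = if j = i then 1 else 0 := by
      split <;> simp
    rw [this] at h0
    exact sub_eq_zero.mp h0
  have heval : epsPn p n r = c i - b i := by
    rw [hrdef]
    rw [map_sub, map_sum]
    have hterm : ∀ j ∈ Finset.univ, epsPn p n (g j * algebraMap (ZMod p) (Rpn p n) (c j))
        = (if j = i then 1 else 0) * c j := by
      intro j _
      rw [map_mul, hgj j]
      congr 1
      simpa using (epsPn p n).commutes (c j)
    rw [Finset.sum_congr rfl hterm]
    have hbi : epsPn p n (algebraMap (ZMod p) (Rpn p n) (b i)) = b i := by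
      simpa using (epsPn p n).commutes (b i)
    rw [hbi]
    congr 1
    simp [Finset.sum_ite_eq']
  rw [hre] at heval
  exact (sub_eq_zero.mp heval.symm).symm
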